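/- Fix k ≤ n and let M be the k × n matrix with entries m_{i,j} = (i-1)(n-j+1). For any k-subset J = {j_1 < j_2 < ... < j_k} of [n], the unique permutation σ ∈ S_k minimizing the weight Σ_{i=1}^k m_{i, j_{σ(i)}} is the identity permutation. In other words, the minimum of Σ_i m_{i, j_{σ(i)}} over σ ∈ S_k is attained only at σ = id. -/
import Mathlib

/-- The diagonal weight matrix entry `m_{i,j} = (i-1)(n-j+1)` (here written 0-indexed:
row `i : Fin k`, column `j : Fin n`, with value `i * (n - j)`). -/
def diagWeight (n : ℕ) {k : ℕ} (i : Fin k) (j : Fin n) : ℝ :=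
  ((i : ℕ) : ℝ) * ((n : ℝ) - ((j : ℕ) : ℝ))

theorem stmt4 {k n : ℕ} (hkn : k ≤ n) (J : Fin k → Fin n) (hJ : StrictMono J)
    (σ : Equiv.Perm (Fin k)) :
    (∑ i : Fin k, diagWeight n i (J i)) ≤ (∑ i : Fin k, diagWeight n i (J (σ i))) ∧
    ((∑ i : Fin k, diagWeight n i (J i)) = (∑ i : Fin k, diagWeight n i (J (σ i))) → σ = 1) := by
  set f : Fin k → ℝ := fun i => ((i : ℕ) : ℝ) with hf
  set g : Fin k → ℝ := fun i => (n : ℝ) - ((J i : ℕ) : ℝ) with hg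
  have hganti : StrictAnti g := by
    intro i j hij
    have : (J i : ℕ) < (J j : ℕ) := hJ hij
    simp only [hg]
    have : ((J i : ℕ) : ℝ) < ((J j : ℕ) : ℝ) := by exact_mod_cast this
    linarith
  have hfg : Antivary f g := by
    intro i j hij
    have hji : j < i := by
      by_contra h
      rcases lt_or_eq_of_le (not_lt.mp h) with h' | h'
      · exact absurd (hganti h') (not_lt.mpr hij.le)
      · subst h'; exact lt_irrefl _ hij
    exact_mod_cast Nat.cast_le.mpr (Fin.le_of_lt hji : (j : ℕ) ≤ (i : ℕ))
  constructor
  · have := hfg.sum_mul_le_sum_mul_comp_perm (σ := σ)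
    simpa [diagWeight, hf, hg] using this
  · intro heq
    have heq' : ∑ i, f i * g (σ i) = ∑ i, f i * g i := by
      have : ∑ i, f i * g i = ∑ i, f i * g (σ i) := by
        simpa [diagWeight, hf, hg] using heq
      exact this.symm
    have hA : Antivary f (g ∘ σ) := (hfg.sum_mul_eq_sum_mul_comp_perm_iff).mp heq'
    have hmono : Monotone σ := by
      intro i j hij
      by_contra h
      have hlt : σ j < σ i := not_le.mp h
      have hgij : g (σ i) < g (σ j) := hganti hlt
      have := hA hgij
      have hji : (j : ℕ) ≤ (i : ℕ) := Nat.cast_le.mp this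
      have : i = j := le_antisymm hij (Fin.le_def.mpr hji)
      subst this
      exact lt_irrefl _ hlt
    have hsm : StrictMono σ := hmono.strictMono_of_injective σ.injective
    have hrange : Set.range σ = Set.range (id : Fin k → Fin k) := by
      simp [σ.surjective.range_eq]
    haveI iwf : WellFoundedLT (Fin k) := inferInstance
    have : (σ : Fin k → Fin k) = id :=
      (@StrictMono.range_inj (Fin k) (Fin k) _ _ iwf _ _ hsm strictMono_id).mp hrange
    ext i
    exact congrArg Fin.val (congrFun this i)
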